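/- arXiv:1309.0867 — 9 statements merged into one kernel-verified Lean document; each statement's English description precedes it below -/
import Mathlib

section
/- For every x in X, the infimum distance (in the sup product metric) from x to the hyperplane {y : X | f y = 0} equals |f x| / (∑ i, ‖a i‖); that is, Metric.infDist x {y | f y = 0} = |f x| / (∑ i, ‖a i‖). -/
open scoped RealInnerProductSpace

theorem infDist_hyperplane_eq
    (m n : ℕ) (hm : 1 ≤ m) (hn : 1 ≤ n)
    (a : Fin m → EuclideanSpace ℝ (Fin n)) (ha : a ≠ 0) (b : ℝ)
    (f : (Fin m → EuclideanSpace ℝ (Fin n)) → ℝ)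
    (hf : ∀ x, f x = (∑ i, ⟪a i, x i⟫) + b)
    (x : Fin m → EuclideanSpace ℝ (Fin n)) :
    Metric.infDist x {y | f y = 0} = |f x| / (∑ i, ‖a i‖) := by
  set S : ℝ := ∑ i, ‖a i‖ with hSdef
  have hSpos : 0 < S := by
    obtain ⟨i, hi⟩ : ∃ i, a i ≠ 0 := by
      by_contra h
      push_neg at h
      exact ha (funext h)
    refine Finset.sum_pos' (fun j _ => norm_nonneg _) ⟨i, Finset.mem_univ i, ?_⟩
    exact norm_pos_iff.mpr hi
  -- unit-ish vectors
  set u : Fin m → EuclideanSpace ℝ (Fin n) := fun i => ‖a i‖⁻¹ • a i with hu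
  have hinner_u : ∀ i, ⟪a i, u i⟫ = ‖a i‖ := by
    intro i
    by_cases h : a i = 0
    · simp [hu, h]
    · rw [hu]
      simp only [real_inner_smul_right, real_inner_self_eq_norm_sq, sq]
      rw [inv_mul_cancel_left₀ (norm_ne_zero_iff.mpr h)]
  have hnorm_u : ∀ i, ‖u i‖ ≤ 1 := by
    intro i
    by_cases h : a i = 0
    · simp [hu, h]
    · rw [hu, norm_smul, norm_inv, norm_norm]
      rw [inv_mul_cancel₀ (norm_ne_zero_iff.mpr h)]
  -- the witness point
  set y : Fin m → EuclideanSpace ℝ (Fin n) := fun i => x i - (f x / S) • u i with hy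
  have hfy : f y = 0 := by
    rw [hf]
    have : ∀ i, ⟪a i, y i⟫ = ⟪a i, x i⟫ - (f x / S) * ‖a i‖ := by
      intro i
      rw [hy]
      simp only [inner_sub_right, real_inner_smul_right, hinner_u]
    simp only [this, Finset.sum_sub_distrib, ← Finset.mul_sum, ← hSdef]
    rw [div_mul_cancel₀ _ hSpos.ne']
    rw [hf x]; ring
  have hymem : y ∈ {y | f y = 0} := hfy
  have hne : Set.Nonempty {y | f y = 0} := ⟨y, hymem⟩
  apply le_antisymm
  · -- infDist ≤ dist x y ≤ |f x|/S
    refine le_trans (Metric.infDist_le_dist_of_mem hymem) ?_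
    rw [dist_pi_le_iff (by positivity)]
    intro i
    rw [dist_eq_norm, hy]
    simp only [sub_sub_cancel, norm_smul]
    calc ‖f x / S‖ * ‖u i‖ ≤ ‖f x / S‖ * 1 :=
          mul_le_mul_of_nonneg_left (hnorm_u i) (norm_nonneg _)
      _ = |f x| / S := by
          rw [mul_one, Real.norm_eq_abs, abs_div, abs_of_pos hSpos]
  · by_contra hlt
    push_neg at hlt
    obtain ⟨z, hz, hdz⟩ := (Metric.infDist_lt_iff hne).mp hlt
    rw [lt_div_iff₀ hSpos] at hdz
    have hz0 : f z = 0 := hz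
    have key : |f x| ≤ S * dist x z := by
      have : f x = ∑ i, ⟪a i, x i - z i⟫ := by
        simp only [inner_sub_right, Finset.sum_sub_distrib]
        rw [hf x]
        have := hz0
        rw [hf z] at this
        linarith
      rw [this]
      calc |∑ i, ⟪a i, x i - z i⟫| ≤ ∑ i, |⟪a i, x i - z i⟫| :=
            Finset.abs_sum_le_sum_abs _ _
        _ ≤ ∑ i, ‖a i‖ * ‖x i - z i‖ := by
            refine Finset.sum_le_sum fun i _ => ?_
            exact abs_real_inner_le_norm _ _
        _ ≤ ∑ i, ‖a i‖ * dist x z := by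
            refine Finset.sum_le_sum fun i _ => ?_
            refine mul_le_mul_of_nonneg_left ?_ (norm_nonneg _)
            rw [← dist_eq_norm]
            exact dist_le_pi_dist x z i
        _ = S * dist x z := by rw [← Finset.sum_mul]
    nlinarith [key, dist_nonneg (x := x) (y := z)]
end

section
/- If x : X satisfies f x ≥ 0, then the infimum distance (in the sup product metric) from x to the open half-space {y : X | f y < 0} equals f x / (∑ i, ‖a i‖); that is, Metric.infDist x {y | f y < 0} = f x / (∑ i, ‖a i‖). (This is the 'depth' of x in the predicate set {f ≥ 0}.) -/
open scoped RealInnerProductSpace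

theorem infDist_open_halfspace_eq
    (m n : ℕ) (hm : 1 ≤ m) (hn : 1 ≤ n)
    (a : Fin m → EuclideanSpace ℝ (Fin n)) (ha : a ≠ 0) (b : ℝ)
    (f : (Fin m → EuclideanSpace ℝ (Fin n)) → ℝ)
    (hf : ∀ x, f x = (∑ i, ⟪a i, x i⟫) + b)
    (x : Fin m → EuclideanSpace ℝ (Fin n)) (hx : f x ≥ 0) :
    Metric.infDist x {y | f y < 0} = f x / (∑ i, ‖a i‖) := by
  set S := ∑ i, ‖a i‖ with hS
  have hSpos : 0 < S := by
    obtain ⟨i, hi⟩ : ∃ i, a i ≠ 0 := by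
      by_contra h; push_neg at h; exact ha (funext h)
    exact Finset.sum_pos' (fun j _ => norm_nonneg _)
      ⟨i, Finset.mem_univ i, norm_pos_iff.mpr hi⟩
  have key : ∀ y, f x - f y ≤ S * dist x y := by
    intro y
    have h1 : f x - f y = ∑ i, ⟪a i, x i - y i⟫ := by
      simp [hf, inner_sub_right, Finset.sum_sub_distrib]
    rw [h1, hS, Finset.sum_mul]
    apply Finset.sum_le_sum
    intro i _
    calc ⟪a i, x i - y i⟫ ≤ ‖a i‖ * ‖x i - y i‖ := real_inner_le_norm _ _
      _ ≤ ‖a i‖ * dist x y := by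
          apply mul_le_mul_of_nonneg_left _ (norm_nonneg _)
          rw [← dist_eq_norm]; exact dist_le_pi_dist x y i
  -- construction for membership / upper bound
  have constr : ∀ ε > (0:ℝ), ∃ y, f y < 0 ∧ dist x y ≤ f x / S + ε := by
    intro ε hε
    set t := f x / S + ε with ht
    have h0 : 0 ≤ f x / S := div_nonneg hx hSpos.le
    have htpos : 0 < t := by rw [ht]; linarith
    refine ⟨fun i => x i - (t / ‖a i‖) • a i, ?_, ?_⟩
    · have hinner : ∀ i, ⟪a i, x i - (t / ‖a i‖) • a i⟫ = ⟪a i, x i⟫ - t * ‖a i‖ := by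
        intro i
        by_cases h : a i = 0
        · simp [h]
        · have hna : ‖a i‖ ≠ 0 := norm_ne_zero_iff.mpr h
          rw [inner_sub_right, real_inner_smul_right, real_inner_self_eq_norm_sq]
          field_simp
      have hfy : f (fun i => x i - (t / ‖a i‖) • a i) = f x - t * S := by
        simp only [hf, hinner, Finset.sum_sub_distrib, ← Finset.mul_sum, ← hS]
        ring
      rw [hfy, ht]
      have : (f x / S + ε) * S = f x + ε * S := by field_simp
      rw [this]
      nlinarith
    · rw [dist_pi_le_iff htpos.le]
      intro i
      rw [dist_eq_norm]
      simp only [sub_sub_cancel, norm_smul, Real.norm_eq_abs]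
      by_cases h : a i = 0
      · simp [h, htpos.le]
      · rw [abs_of_nonneg (div_nonneg htpos.le (norm_nonneg _)),
          div_mul_cancel₀ _ (norm_ne_zero_iff.mpr h)]
  have hne : {y | f y < 0}.Nonempty := by
    obtain ⟨y, hy, -⟩ := constr 1 one_pos
    exact ⟨y, hy⟩
  apply le_antisymm
  · by_contra hlt
    push_neg at hlt
    obtain ⟨y, hy, hd⟩ := constr ((Metric.infDist x {y | f y < 0} - f x / S) / 2)
      (by linarith)
    have := Metric.infDist_le_dist_of_mem (x := x) (show y ∈ {y | f y < 0} from hy)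
    linarith
  · rw [Metric.infDist_eq_iInf]
    haveI := hne.to_subtype
    apply le_ciInf
    rintro ⟨y, hy⟩
    have hy' : f y < 0 := hy
    have := key y
    rw [div_le_iff₀ hSpos, mul_comm]
    linarith
end

section
/- If x : X satisfies f x < 0, then the infimum distance (in the sup product metric) from x to the closed half-space {y : X | f y ≥ 0} equals -(f x) / (∑ i, ‖a i‖); that is, Metric.infDist x {y | f y ≥ 0} = -(f x) / (∑ i, ‖a i‖). -/
open scoped RealInnerProductSpace

theorem infDist_closed_halfspace_eq
    (m n : ℕ) (hm : 1 ≤ m) (hn : 1 ≤ n)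
    (a : Fin m → EuclideanSpace ℝ (Fin n)) (ha : a ≠ 0) (b : ℝ)
    (f : (Fin m → EuclideanSpace ℝ (Fin n)) → ℝ)
    (hf : ∀ x, f x = (∑ i, ⟪a i, x i⟫) + b)
    (x : Fin m → EuclideanSpace ℝ (Fin n)) (hx : f x < 0) :
    Metric.infDist x {y | f y ≥ 0} = -(f x) / (∑ i, ‖a i‖) := by
  set S : ℝ := ∑ i, ‖a i‖ with hSdef
  have hSpos : 0 < S := by
    obtain ⟨i, hi⟩ : ∃ i, a i ≠ 0 := by
      by_contra h
      push_neg at h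
      exact ha (funext h)
    exact Finset.sum_pos' (fun j _ => norm_nonneg _)
      ⟨i, Finset.mem_univ i, norm_pos_iff.2 hi⟩
  set t : ℝ := -f x / S with htdef
  have ht : 0 ≤ t := div_nonneg (by linarith) hSpos.le
  -- construct the witness point
  set y : Fin m → EuclideanSpace ℝ (Fin n) := fun i => x i + (t / ‖a i‖) • a i with hydef
  have hinner : ∀ i, ⟪a i, y i⟫ = ⟪a i, x i⟫ + t * ‖a i‖ := by
    intro i
    by_cases h : a i = 0
    · simp [hydef, h]
    · have hni : ‖a i‖ ≠ 0 := norm_ne_zero_iff.2 h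
      rw [hydef]
      simp only [inner_add_right, real_inner_smul_right, real_inner_self_eq_norm_sq]
      field_simp
  have hfy : f y = 0 := by
    rw [hf, Finset.sum_congr rfl (fun i _ => hinner i), Finset.sum_add_distrib,
      ← Finset.mul_sum, ← hSdef, htdef]
    have h2 := hf x
    have h3 : t * S = -f x := div_mul_cancel₀ _ hSpos.ne'
    linarith
  have hymem : y ∈ {y | f y ≥ 0} := by simp [hfy]
  have hdistxy : dist x y ≤ t := by
    rw [dist_pi_le_iff ht]
    intro i
    by_cases h : a i = 0
    · simp [hydef, h, dist_self, ht]
    · have hni : (0:ℝ) < ‖a i‖ := norm_pos_iff.2 h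
      have : dist (x i) (y i) = ‖(t / ‖a i‖) • a i‖ := by
        rw [hydef, dist_eq_norm]
        simp
      rw [this, norm_smul, Real.norm_eq_abs, abs_of_nonneg (div_nonneg ht hni.le)]
      field_simp
      exact le_rfl
  apply le_antisymm
  · calc Metric.infDist x {y | f y ≥ 0} ≤ dist x y :=
          Metric.infDist_le_dist_of_mem hymem
      _ ≤ t := hdistxy
  · by_contra hlt
    push_neg at hlt
    obtain ⟨z, hz, hdz⟩ := (Metric.infDist_lt_iff ⟨y, hymem⟩).1 hlt
    apply absurd hdz
    rw [not_lt]
    show t ≤ dist x z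
    have hfz : 0 ≤ f z := hz
    have key : f z - f x ≤ S * dist x z := by
      have h1 : f z - f x = ∑ i, ⟪a i, z i - x i⟫ := by
        rw [hf, hf]
        rw [show ∀ p q r : ℝ, p + r - (q + r) = p - q from fun p q r => by ring,
          ← Finset.sum_sub_distrib]
        simp [inner_sub_right]
      rw [h1, hSdef, Finset.sum_mul]
      apply Finset.sum_le_sum
      intro i _
      calc ⟪a i, z i - x i⟫ ≤ ‖a i‖ * ‖z i - x i‖ := real_inner_le_norm _ _
        _ ≤ ‖a i‖ * dist x z := by
            apply mul_le_mul_of_nonneg_left _ (norm_nonneg _)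
            rw [← dist_eq_norm']
            exact dist_le_pi_dist x z i
    have : -f x ≤ S * dist x z := by linarith
    rw [htdef, div_le_iff₀ hSpos]
    linarith
end

section
/- The distance from a point to the hyperplane {f = 0} is attained: for every x : X there exists y : X with f y = 0 and dist x y = |f x| / (∑ i, ‖a i‖), where dist is the sup product metric. -/
open scoped RealInnerProductSpace

theorem dist_to_hyperplane_attained
    (m n : ℕ) (hm : 1 ≤ m) (hn : 1 ≤ n)
    (a : Fin m → EuclideanSpace ℝ (Fin n)) (ha : a ≠ 0) (b : ℝ)
    (f : (Fin m → EuclideanSpace ℝ (Fin n)) → ℝ)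
    (hf : ∀ x, f x = (∑ i, ⟪a i, x i⟫) + b)
    (x : Fin m → EuclideanSpace ℝ (Fin n)) :
    ∃ y : Fin m → EuclideanSpace ℝ (Fin n),
      f y = 0 ∧ dist x y = |f x| / (∑ i, ‖a i‖) := by
  set S := ∑ i, ‖a i‖ with hSdef
  obtain ⟨i₀, hi₀⟩ : ∃ i, a i ≠ 0 := by
    by_contra h
    push_neg at h
    exact ha (funext h)
  have hS : 0 < S := Finset.sum_pos' (fun i _ => norm_nonneg _)
    ⟨i₀, Finset.mem_univ _, norm_pos_iff.mpr hi₀⟩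
  set c := f x / S with hcdef
  refine ⟨fun i => x i - (c * ‖a i‖⁻¹) • a i, ?_, ?_⟩
  · rw [hf]
    have hterm : ∀ i ∈ Finset.univ, ⟪a i, x i - (c * ‖a i‖⁻¹) • a i⟫ =
        ⟪a i, x i⟫ - c * ‖a i‖ := by
      intro i _
      rw [inner_sub_right, real_inner_smul_right, real_inner_self_eq_norm_sq]
      by_cases h : a i = 0
      · simp [h]
      · have hn0 : ‖a i‖ ≠ 0 := norm_ne_zero_iff.mpr h
        field_simp
    rw [Finset.sum_congr rfl hterm, Finset.sum_sub_distrib, ← Finset.mul_sum]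
    have hcS : c * S = f x := div_mul_cancel₀ _ hS.ne'
    rw [hf x] at hcS
    linarith [hcS]
  · have hd : ∀ i, dist (x i) ((fun i => x i - (c * ‖a i‖⁻¹) • a i) i)
        = |c| * (‖a i‖⁻¹ * ‖a i‖) := by
      intro i
      simp [dist_eq_norm, norm_smul, abs_mul,
        abs_of_nonneg (inv_nonneg.2 (norm_nonneg (a i))), mul_assoc]
    have hceq : |f x| / S = |c| := by
      rw [hcdef, abs_div, abs_of_pos hS]
    rw [hceq]
    apply le_antisymm
    · refine (dist_pi_le_iff (abs_nonneg _)).mpr fun i => ?_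
      rw [hd i]
      by_cases h : a i = 0
      · simp [h, abs_nonneg]
      · rw [inv_mul_cancel₀ (norm_ne_zero_iff.mpr h), mul_one]
    · have h2 := dist_le_pi_dist x (fun i => x i - (c * ‖a i‖⁻¹) • a i) i₀
      rw [hd i₀, inv_mul_cancel₀ (norm_ne_zero_iff.mpr hi₀), mul_one] at h2
      exact h2
end

section
/- Distance to a half-space restricted to a diagonal: let k l : Fin m with k ≠ l, and assume that the merged coefficient family is nonzero, i.e. a k + a l ≠ 0 or a i ≠ 0 for some i ∉ {k, l}. Then for every x : X with x k = x l, the infimum distance (in the sup product metric) from x to the set {y : X | f y = 0 ∧ y k = y l} equals |f x| / (‖a k + a l‖ + ∑ over i ∈ Finset.univ \ {k, l} of ‖a i‖). -/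
open scoped RealInnerProductSpace

theorem infDist_hyperplane_on_diagonal
    (m n : ℕ) (hm : 2 ≤ m) (hn : 1 ≤ n)
    (a : Fin m → EuclideanSpace ℝ (Fin n)) (ha : a ≠ 0) (b : ℝ)
    (f : (Fin m → EuclideanSpace ℝ (Fin n)) → ℝ)
    (hf : ∀ x, f x = (∑ i, ⟪a i, x i⟫) + b)
    (k l : Fin m) (hkl : k ≠ l)
    (hmerged : a k + a l ≠ 0 ∨ ∃ i ∈ Finset.univ \ ({k, l} : Finset (Fin m)), a i ≠ 0)
    (x : Fin m → EuclideanSpace ℝ (Fin n)) (hx : x k = x l) :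
    Metric.infDist x {y | f y = 0 ∧ y k = y l}
      = |f x| / (‖a k + a l‖ + ∑ i ∈ Finset.univ \ {k, l}, ‖a i‖) := by
  classical
  set C : ℝ := ‖a k + a l‖ + ∑ i ∈ Finset.univ \ ({k, l} : Finset (Fin m)), ‖a i‖ with hC
  have hsum_nonneg : (0:ℝ) ≤ ∑ i ∈ Finset.univ \ ({k, l} : Finset (Fin m)), ‖a i‖ :=
    Finset.sum_nonneg fun i _ => norm_nonneg _
  have hCpos : 0 < C := by
    rcases hmerged with h | ⟨i, hi, hai⟩
    · have := norm_pos_iff.mpr h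
      simp only [hC]; linarith
    · have h1 : ‖a i‖ ≤ ∑ j ∈ Finset.univ \ ({k, l} : Finset (Fin m)), ‖a j‖ :=
        Finset.single_le_sum (fun j _ => norm_nonneg (a j)) hi
      have h2 := norm_pos_iff.mpr hai
      have h3 := norm_nonneg (a k + a l)
      simp only [hC]; linarith
  have hsplit : ∀ (g : Fin m → ℝ),
      (∑ i, g i) = g k + g l + ∑ i ∈ Finset.univ \ ({k, l} : Finset (Fin m)), g i := by
    intro g
    have h := Finset.sum_sdiff (f := g) (Finset.subset_univ ({k, l} : Finset (Fin m)))
    rw [Finset.sum_pair hkl] at h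
    linarith
  have hkey : ∀ v : EuclideanSpace ℝ (Fin n), ⟪v, ‖v‖⁻¹ • v⟫ = ‖v‖ := by
    intro v
    by_cases hv : v = 0
    · simp [hv]
    · rw [real_inner_smul_right, real_inner_self_eq_norm_sq]
      have : ‖v‖ ≠ 0 := norm_ne_zero_iff.mpr hv
      field_simp
  have hnorm_le : ∀ v : EuclideanSpace ℝ (Fin n), ‖(‖v‖⁻¹ • v)‖ ≤ 1 := by
    intro v
    by_cases hv : v = 0
    · simp [hv]
    · have : ‖v‖ ≠ 0 := norm_ne_zero_iff.mpr hv
      rw [norm_smul, norm_inv, norm_norm, inv_mul_cancel₀ this]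
  -- construction of the closest point
  set u : EuclideanSpace ℝ (Fin n) := ‖a k + a l‖⁻¹ • (a k + a l) with hu
  set d : Fin m → EuclideanSpace ℝ (Fin n) :=
    fun i => if i = k ∨ i = l then u else ‖a i‖⁻¹ • a i with hd
  set t : ℝ := f x / C with ht
  set y : Fin m → EuclideanSpace ℝ (Fin n) := fun i => x i - t • d i with hy
  have hdk : d k = u := by simp [hd]
  have hdl : d l = u := by simp [hd]
  have hsumd : (∑ i, ⟪a i, d i⟫) = C := by
    rw [hsplit (fun i => ⟪a i, d i⟫)]
    have h1 : ⟪a k, d k⟫ + ⟪a l, d l⟫ = ‖a k + a l‖ := by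
      rw [hdk, hdl, ← inner_add_left, hu, hkey]
    have h2 : (∑ i ∈ Finset.univ \ ({k, l} : Finset (Fin m)), ⟪a i, d i⟫)
        = ∑ i ∈ Finset.univ \ ({k, l} : Finset (Fin m)), ‖a i‖ := by
      apply Finset.sum_congr rfl
      intro i hi
      simp only [Finset.mem_sdiff, Finset.mem_insert, Finset.mem_singleton] at hi
      have hik : ¬ (i = k ∨ i = l) := by tauto
      simp only [hd, hik, if_false]
      exact hkey (a i)
    rw [h2]; linarith [h1]
  have hfy : f y = 0 := by
    rw [hf]
    have : (∑ i, ⟪a i, y i⟫) = (∑ i, ⟪a i, x i⟫) - t * C := by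
      rw [← hsumd, Finset.mul_sum, ← Finset.sum_sub_distrib]
      apply Finset.sum_congr rfl
      intro i _
      simp only [hy]
      rw [inner_sub_right, real_inner_smul_right]
    rw [this, ht, div_mul_cancel₀ _ (ne_of_gt hCpos)]
    linarith [hf x]
  have hykl : y k = y l := by
    simp only [hy, hdk, hdl, hx]
  have hymem : y ∈ {y | f y = 0 ∧ y k = y l} := ⟨hfy, hykl⟩
  have hdistxy : dist x y ≤ |t| := by
    rw [dist_pi_le_iff (abs_nonneg t)]
    intro i
    have : x i - y i = t • d i := by simp [hy]
    rw [dist_eq_norm, this, norm_smul, Real.norm_eq_abs]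
    have hdi : ‖d i‖ ≤ 1 := by
      by_cases hik : i = k ∨ i = l
      · simp only [hd, hik, if_true, hu]; exact hnorm_le _
      · simp only [hd, hik, if_false]; exact hnorm_le _
    calc |t| * ‖d i‖ ≤ |t| * 1 := mul_le_mul_of_nonneg_left hdi (abs_nonneg t)
      _ = |t| := mul_one _
  have hupper : Metric.infDist x {y | f y = 0 ∧ y k = y l} ≤ |f x| / C := by
    have h := Metric.infDist_le_dist_of_mem (x := x) hymem
    have : |t| = |f x| / C := by
      rw [ht, abs_div, abs_of_pos hCpos]
    linarith [hdistxy]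
  have hptwise : ∀ z ∈ {y | f y = 0 ∧ y k = y l}, |f x| / C ≤ dist x z := by
    intro z hz
    obtain ⟨hfz, hzkl⟩ := hz
    rw [div_le_iff₀ hCpos]
    have hfsub : f x - f z = ∑ i, ⟪a i, x i - z i⟫ := by
      rw [hf, hf]
      have hinner : ∀ i : Fin m, ⟪a i, x i - z i⟫ = ⟪a i, x i⟫ - ⟪a i, z i⟫ :=
        fun i => inner_sub_right _ _ _
      simp only [hinner]
      rw [Finset.sum_sub_distrib]
      ring
    have hsum2 : (∑ i, ⟪a i, x i - z i⟫)
        = ⟪a k + a l, x k - z k⟫ + ∑ i ∈ Finset.univ \ ({k, l} : Finset (Fin m)), ⟪a i, x i - z i⟫ := by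
      rw [hsplit (fun i => ⟪a i, x i - z i⟫)]
      have : x l - z l = x k - z k := by rw [← hx, ← hzkl]
      rw [this, ← inner_add_left]
    have hb1 : |⟪a k + a l, x k - z k⟫| ≤ ‖a k + a l‖ * dist x z := by
      calc |⟪a k + a l, x k - z k⟫| ≤ ‖a k + a l‖ * ‖x k - z k‖ := abs_real_inner_le_norm _ _
        _ ≤ ‖a k + a l‖ * dist x z := by
            apply mul_le_mul_of_nonneg_left _ (norm_nonneg _)
            rw [← dist_eq_norm]
            exact dist_le_pi_dist x z k
    have hb2 : |∑ i ∈ Finset.univ \ ({k, l} : Finset (Fin m)), ⟪a i, x i - z i⟫|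
        ≤ (∑ i ∈ Finset.univ \ ({k, l} : Finset (Fin m)), ‖a i‖) * dist x z := by
      calc |∑ i ∈ Finset.univ \ ({k, l} : Finset (Fin m)), ⟪a i, x i - z i⟫|
          ≤ ∑ i ∈ Finset.univ \ ({k, l} : Finset (Fin m)), |⟪a i, x i - z i⟫| :=
            Finset.abs_sum_le_sum_abs _ _
        _ ≤ ∑ i ∈ Finset.univ \ ({k, l} : Finset (Fin m)), ‖a i‖ * dist x z := by
            apply Finset.sum_le_sum
            intro i _
            calc |⟪a i, x i - z i⟫| ≤ ‖a i‖ * ‖x i - z i‖ := abs_real_inner_le_norm _ _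
              _ ≤ ‖a i‖ * dist x z := by
                  apply mul_le_mul_of_nonneg_left _ (norm_nonneg _)
                  rw [← dist_eq_norm]
                  exact dist_le_pi_dist x z i
        _ = (∑ i ∈ Finset.univ \ ({k, l} : Finset (Fin m)), ‖a i‖) * dist x z := by
            rw [← Finset.sum_mul]
    have : |f x| = |f x - f z| := by rw [hfz, sub_zero]
    rw [this, hfsub, hsum2]
    calc |⟪a k + a l, x k - z k⟫ + ∑ i ∈ Finset.univ \ ({k, l} : Finset (Fin m)), ⟪a i, x i - z i⟫|
        ≤ |⟪a k + a l, x k - z k⟫| + |∑ i ∈ Finset.univ \ ({k, l} : Finset (Fin m)), ⟪a i, x i - z i⟫| :=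
          abs_add_le _ _
      _ ≤ ‖a k + a l‖ * dist x z + (∑ i ∈ Finset.univ \ ({k, l} : Finset (Fin m)), ‖a i‖) * dist x z := by
          linarith [hb1, hb2]
      _ = dist x z * C := by rw [hC]; ring
  have hlower : |f x| / C ≤ Metric.infDist x {y | f y = 0 ∧ y k = y l} := by
    by_contra hcon
    push_neg at hcon
    obtain ⟨z, hz, hdz⟩ := (Metric.infDist_lt_iff ⟨y, hymem⟩).mp hcon
    exact absurd (hptwise z hz) (not_le.mpr hdz)
  linarith [hupper, hlower]
end

section
/- Soundness of the max rule for disjunction: in any (pseudo e)metric space, if r is a sound robustness estimate for A at x and q is a sound robustness estimate for B at x, then max r q is a sound robustness estimate for A ∪ B at x; that is, -(EMetric.infEdist x (A ∪ B)) ≤ (max r q : EReal) and (max r q : EReal) ≤ EMetric.infEdist x (A ∪ B)ᶜ. -/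
theorem max_rule_sound_for_union {X : Type*} [PseudoEMetricSpace X]
    (x : X) (A B : Set X) (r q : ℝ)
    (hrA₁ : -(EMetric.infEdist x A : EReal) ≤ (r : EReal))
    (hrA₂ : (r : EReal) ≤ (EMetric.infEdist x Aᶜ : EReal))
    (hqB₁ : -(EMetric.infEdist x B : EReal) ≤ (q : EReal))
    (hqB₂ : (q : EReal) ≤ (EMetric.infEdist x Bᶜ : EReal)) :
    -(EMetric.infEdist x (A ∪ B) : EReal) ≤ ((max r q : ℝ) : EReal) ∧
    ((max r q : ℝ) : EReal) ≤ (EMetric.infEdist x (A ∪ B)ᶜ : EReal) := by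
  constructor
  · rw [show EMetric.infEdist x (A ∪ B) = min (EMetric.infEdist x A) (EMetric.infEdist x B) from
      EMetric.infEdist_union]
    rcases min_le_iff.mpr (Or.inl (le_refl (EMetric.infEdist x A))) with _
    rcases le_total (EMetric.infEdist x A) (EMetric.infEdist x B) with h | h
    · rw [min_eq_left h]
      exact hrA₁.trans (by exact_mod_cast EReal.coe_le_coe_iff.mpr (le_max_left r q))
    · rw [min_eq_right h]
      exact hqB₁.trans (by exact_mod_cast EReal.coe_le_coe_iff.mpr (le_max_right r q))
  · rw [Set.compl_union]
    have h1 : EMetric.infEdist x Aᶜ ≤ EMetric.infEdist x (Aᶜ ∩ Bᶜ) :=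
      EMetric.infEdist_anti Set.inter_subset_left
    have h2 : EMetric.infEdist x Bᶜ ≤ EMetric.infEdist x (Aᶜ ∩ Bᶜ) :=
      EMetric.infEdist_anti Set.inter_subset_right
    rcases le_total r q with h | h
    · rw [max_eq_right h]
      exact hqB₂.trans (by exact_mod_cast h2)
    · rw [max_eq_left h]
      exact hrA₂.trans (by exact_mod_cast h1)
end

section
/- Soundness of the min rule for conjunction: in any (pseudo e)metric space, if r is a sound robustness estimate for A at x and q is a sound robustness estimate for B at x, then min r q is a sound robustness estimate for A ∩ B at x; that is, -(EMetric.infEdist x (A ∩ B)) ≤ (min r q : EReal) and (min r q : EReal) ≤ EMetric.infEdist x (A ∩ B)ᶜ. -/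
theorem min_rule_sound_for_inter {X : Type*} [PseudoEMetricSpace X]
    (x : X) (A B : Set X) (r q : ℝ)
    (hrA₁ : -(EMetric.infEdist x A : EReal) ≤ (r : EReal))
    (hrA₂ : (r : EReal) ≤ (EMetric.infEdist x Aᶜ : EReal))
    (hqB₁ : -(EMetric.infEdist x B : EReal) ≤ (q : EReal))
    (hqB₂ : (q : EReal) ≤ (EMetric.infEdist x Bᶜ : EReal)) :
    -(EMetric.infEdist x (A ∩ B) : EReal) ≤ ((min r q : ℝ) : EReal) ∧
    ((min r q : ℝ) : EReal) ≤ (EMetric.infEdist x (A ∩ B)ᶜ : EReal) := by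
  have hA : EMetric.infEdist x A ≤ EMetric.infEdist x (A ∩ B) :=
    EMetric.infEdist_anti Set.inter_subset_left
  have hB : EMetric.infEdist x B ≤ EMetric.infEdist x (A ∩ B) :=
    EMetric.infEdist_anti Set.inter_subset_right
  have hc : (A ∩ B)ᶜ = Aᶜ ∪ Bᶜ := Set.compl_inter A B
  have hu : EMetric.infEdist x (Aᶜ ∪ Bᶜ) =
      min (EMetric.infEdist x Aᶜ) (EMetric.infEdist x Bᶜ) :=
    EMetric.infEdist_union
  constructor
  · rcases le_total r q with h | h
    · rw [min_eq_left h]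
      refine le_trans ?_ hrA₁
      exact EReal.neg_le_neg_iff.mpr (EReal.coe_ennreal_le_coe_ennreal_iff.mpr hA)
    · rw [min_eq_right h]
      refine le_trans ?_ hqB₁
      exact EReal.neg_le_neg_iff.mpr (EReal.coe_ennreal_le_coe_ennreal_iff.mpr hB)
  · rw [hc, hu]
    rcases le_total (EMetric.infEdist x Aᶜ) (EMetric.infEdist x Bᶜ) with h | h
    · rw [min_eq_left h]
      exact le_trans (by exact_mod_cast min_le_left r q) hrA₂
    · rw [min_eq_right h]
      exact le_trans (by exact_mod_cast min_le_right r q) hqB₂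
end

section
/- Soundness of the supremum rule (existential/until modality): in any (pseudo e)metric space, let T be a type, A : T → Set X and r : T → ℝ such that for every t, r t is a sound robustness estimate for A t at x. Then -(EMetric.infEdist x (⋃ t, A t)) ≤ ⨆ t, (r t : EReal) and ⨆ t, (r t : EReal) ≤ EMetric.infEdist x (⋃ t, A t)ᶜ, where the supremum is taken in EReal. -/
open scoped ENNReal
lemma coe_ennreal_iInf' {ι : Type*} (f : ι → ℝ≥0∞) :
    ((⨅ i, f i : ℝ≥0∞) : EReal) = ⨅ i, (f i : EReal) := by
  apply le_antisymm
  · exact le_iInf fun i => EReal.coe_ennreal_le_coe_ennreal_iff.2 (iInf_le f i)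
  · have h0 : (0 : EReal) ≤ ⨅ i, (f i : EReal) := le_iInf fun i => EReal.coe_ennreal_nonneg _
    lift (⨅ i, (f i : EReal)) to ℝ≥0∞ using h0 with b hb
    refine EReal.coe_ennreal_le_coe_ennreal_iff.2 (le_iInf fun i => ?_)
    exact EReal.coe_ennreal_le_coe_ennreal_iff.1 (hb ▸ iInf_le _ i)

theorem sup_rule_sound_for_iUnion {X : Type*} [PseudoEMetricSpace X]
    (x : X) (T : Type*) (A : T → Set X) (r : T → ℝ)
    (h : ∀ t, -(EMetric.infEdist x (A t) : EReal) ≤ (r t : EReal) ∧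
              (r t : EReal) ≤ (EMetric.infEdist x (A t)ᶜ : EReal)) :
    -(EMetric.infEdist x (⋃ t, A t) : EReal) ≤ ⨆ t, (r t : EReal) ∧
    (⨆ t, (r t : EReal)) ≤ (EMetric.infEdist x (⋃ t, A t)ᶜ : EReal) := by
  constructor
  · rw [show EMetric.infEdist x (⋃ t, A t) = ⨅ t, EMetric.infEdist x (A t) from EMetric.infEdist_iUnion A x, coe_ennreal_iInf', EReal.neg_le]
    refine le_iInf fun t => ?_
    rw [← EReal.neg_le]
    exact (h t).1.trans (le_iSup (fun t => ((r t : EReal))) t)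
  · refine iSup_le fun t => (h t).2.trans ?_
    refine EReal.coe_ennreal_le_coe_ennreal_iff.2 (EMetric.infEdist_anti ?_)
    rw [Set.compl_iUnion]
    exact Set.iInter_subset _ t
end

section
/- Soundness of the infimum rule (universal/globally modality): in any (pseudo e)metric space, let T be a type, A : T → Set X and r : T → ℝ such that for every t, r t is a sound robustness estimate for A t at x. Then -(EMetric.infEdist x (⋂ t, A t)) ≤ ⨅ t, (r t : EReal) and ⨅ t, (r t : EReal) ≤ EMetric.infEdist x (⋂ t, A t)ᶜ, where the infimum is taken in EReal. -/
lemma iInf_coe_ennreal_le {T : Type*} (d : T → ENNReal) :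
    (⨅ t, (d t : EReal)) ≤ ((⨅ t, d t : ENNReal) : EReal) := by
  by_contra hlt
  push_neg at hlt
  obtain ⟨c, hc1, hc2⟩ := exists_between hlt
  have hc0 : (0 : EReal) ≤ c := le_trans (EReal.coe_ennreal_nonneg _) hc1.le
  lift c to ENNReal using hc0 with c'
  have : c' ≤ ⨅ t, d t := le_iInf fun t => by
    have := lt_of_lt_of_le hc2 (iInf_le _ t)
    exact (EReal.coe_ennreal_lt_coe_ennreal_iff.mp this).le
  exact absurd (EReal.coe_ennreal_le_coe_ennreal_iff.mpr this) (not_le.mpr hc1)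

theorem inf_rule_sound_for_iInter {X : Type*} [PseudoEMetricSpace X]
    (x : X) (T : Type*) (A : T → Set X) (r : T → ℝ)
    (h : ∀ t, -(EMetric.infEdist x (A t) : EReal) ≤ (r t : EReal) ∧
              (r t : EReal) ≤ (EMetric.infEdist x (A t)ᶜ : EReal)) :
    -(EMetric.infEdist x (⋂ t, A t) : EReal) ≤ ⨅ t, (r t : EReal) ∧
    (⨅ t, (r t : EReal)) ≤ (EMetric.infEdist x (⋂ t, A t)ᶜ : EReal) := by
  constructor
  · apply le_iInf fun t => ?_
    refine le_trans ?_ (h t).1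
    rw [EReal.neg_le_neg_iff]
    exact EReal.coe_ennreal_le_coe_ennreal_iff.mpr
      (EMetric.infEdist_anti (Set.iInter_subset A t))
  · rw [Set.compl_iInter, EMetric.infEdist, Metric.infEDist_iUnion]
    refine le_trans ?_ (iInf_coe_ennreal_le _)
    exact le_iInf fun t => le_trans (iInf_le _ t) (h t).2
end
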